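/- (Key monotonicity inequality, equation (csum≥0).) Fix M ≥ 1, v₀ > 0, ionic volumes v_l > 0, valences z_l ∈ ℝ, β > 0, e > 0. Let γ : ℝ → ℝ and B_l : ℝ → ℝ (l = 1,…,M) be differentiable functions such that for all ψ ∈ ℝ: B_l(ψ) > 0, γ(ψ) = 1 − Σ_{l=1}^M v_l B_l(ψ) > 0, γ′(ψ) = β v₀ e γ(ψ) (Σ_l z_l v_l B_l(ψ)) / (v₀ γ(ψ) + Σ_l v_l² B_l(ψ)), and B_l′(ψ) = ( (v_l γ′(ψ))/(v₀ γ(ψ)) − β z_l e ) B_l(ψ). Then for every ψ ∈ ℝ, Σ_{l=1}^M z_l B_l′(ψ) ≤ −(β e v₀ γ(ψ) / (v₀ γ(ψ) + Σ_{j=1}^M v_j² B_j(ψ))) · Σ_{j=1}^M z_j² B_j(ψ) ≤ 0. -/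

import Mathlib

open scoped BigOperators

/-- key monotonicity inequality, eq. (csum≥0): under the derivative
identities (GammaPrime) and (CPrime), for every `ψ`,
`∑ l, z_l B_l′(ψ) ≤ −(β e v₀ γ(ψ)/(v₀ γ(ψ) + ∑ j, v_j² B_j(ψ))) ∑ j, z_j² B_j(ψ) ≤ 0`. -/
theorem sum_z_deriv_nonpos
    (M : ℕ) (hM : 1 ≤ M) (v₀ : ℝ) (hv₀ : 0 < v₀)
    (v z : Fin M → ℝ) (hv : ∀ l, 0 < v l)
    (β e : ℝ) (hβ : 0 < β) (he : 0 < e)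
    (γ : ℝ → ℝ) (B : Fin M → ℝ → ℝ)
    (hγdiff : Differentiable ℝ γ) (hBdiff : ∀ l, Differentiable ℝ (B l))
    (hBpos : ∀ l (ψ : ℝ), 0 < B l ψ)
    (hγeq : ∀ ψ : ℝ, γ ψ = 1 - ∑ l, v l * B l ψ)
    (hγpos : ∀ ψ : ℝ, 0 < γ ψ)
    (hγ' : ∀ ψ : ℝ, deriv γ ψ =
      β * v₀ * e * γ ψ * (∑ l, z l * v l * B l ψ) /
        (v₀ * γ ψ + ∑ l, (v l) ^ 2 * B l ψ))
    (hB' : ∀ l (ψ : ℝ), deriv (B l) ψ =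
      (v l * deriv γ ψ / (v₀ * γ ψ) - β * z l * e) * B l ψ) :
    ∀ ψ : ℝ,
      (∑ l, z l * deriv (B l) ψ ≤
        -(β * e * v₀ * γ ψ / (v₀ * γ ψ + ∑ j, (v j) ^ 2 * B j ψ)) *
          ∑ j, (z j) ^ 2 * B j ψ) ∧
      -(β * e * v₀ * γ ψ / (v₀ * γ ψ + ∑ j, (v j) ^ 2 * B j ψ)) *
          ∑ j, (z j) ^ 2 * B j ψ ≤ 0 := by
  intro ψ
  have hγψ := hγpos ψ
  set S1 := ∑ l, z l * v l * B l ψ with hS1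
  set S2 := ∑ l, (v l) ^ 2 * B l ψ with hS2
  set Q := ∑ l, (z l) ^ 2 * B l ψ with hQ
  have hQnn : 0 ≤ Q := Finset.sum_nonneg fun l _ =>
    mul_nonneg (sq_nonneg _) (hBpos l ψ).le
  have hS2nn : 0 ≤ S2 := Finset.sum_nonneg fun l _ =>
    mul_nonneg (sq_nonneg _) (hBpos l ψ).le
  have hD : 0 < v₀ * γ ψ + S2 := by positivity
  -- Cauchy–Schwarz: S1^2 ≤ Q * S2
  have hCS : S1 ^ 2 ≤ Q * S2 := by
    have h2 : (∑ l, (z l * Real.sqrt (B l ψ)) * (v l * Real.sqrt (B l ψ))) ^ 2 ≤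
        (∑ l, (z l * Real.sqrt (B l ψ)) ^ 2) * (∑ l, (v l * Real.sqrt (B l ψ)) ^ 2) :=
      Finset.sum_mul_sq_le_sq_mul_sq Finset.univ _ _
    have e1 : (∑ l, (z l * Real.sqrt (B l ψ)) * (v l * Real.sqrt (B l ψ))) = S1 := by
      apply Finset.sum_congr rfl; intro l _
      have : Real.sqrt (B l ψ) * Real.sqrt (B l ψ) = B l ψ :=
        Real.mul_self_sqrt (hBpos l ψ).le
      ring_nf
      rw [Real.sq_sqrt (hBpos l ψ).le]; ring
    have e2 : (∑ l, (z l * Real.sqrt (B l ψ)) ^ 2) = Q := by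
      apply Finset.sum_congr rfl; intro l _
      rw [mul_pow, Real.sq_sqrt (hBpos l ψ).le]
    have e3 : (∑ l, (v l * Real.sqrt (B l ψ)) ^ 2) = S2 := by
      apply Finset.sum_congr rfl; intro l _
      rw [mul_pow, Real.sq_sqrt (hBpos l ψ).le]
    rwa [e1, e2, e3] at h2
  have hsum : ∑ l, z l * deriv (B l) ψ =
      deriv γ ψ / (v₀ * γ ψ) * S1 - β * e * Q := by
    rw [hS1, hQ, Finset.mul_sum, Finset.mul_sum, ← Finset.sum_sub_distrib]
    apply Finset.sum_congr rfl; intro l _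
    rw [hB' l ψ]; ring
  have hderiv : deriv γ ψ / (v₀ * γ ψ) = β * e * S1 / (v₀ * γ ψ + S2) := by
    rw [hγ' ψ]
    rw [← hS1, ← hS2]
    field_simp
  have hQSle : β * e * S1 ^ 2 ≤ β * e * (Q * S2) := by
    have : 0 < β * e := mul_pos hβ he
    nlinarith [hCS]
  constructor
  · rw [hsum, hderiv]
    have lhs_eq : β * e * S1 / (v₀ * γ ψ + S2) * S1 - β * e * Q =
        (β * e * S1 ^ 2 - β * e * Q * (v₀ * γ ψ + S2)) / (v₀ * γ ψ + S2) := by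
      field_simp
    have rhs_eq : -(β * e * v₀ * γ ψ / (v₀ * γ ψ + S2)) * Q =
        (-(β * e * v₀ * γ ψ * Q)) / (v₀ * γ ψ + S2) := by
      field_simp
    rw [lhs_eq, rhs_eq]
    exact div_le_div_of_nonneg_right (by nlinarith [hQSle]) hD.le
  · have h1 : 0 ≤ β * e * v₀ * γ ψ / (v₀ * γ ψ + S2) * Q :=
      mul_nonneg (div_nonneg (by positivity) hD.le) hQnn
    linarith
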